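/- Selection under an almost-sure conditional-probability budget controls both FSR and mFSR (key step in the proof of Theorem 2). Suppose the {0,2}-valued random variables δ_1,…,δ_m are measurable with respect to σ(𝒲) and satisfy, almost surely, Σ_{j=1}^m T^j·1(δ_j = 2) ≤ α·Σ_{j=1}^m 1(δ_j = 2) for a constant α ∈ (0,1). Then (i) E[ Σ_{j=1}^m 1(δ_j = 2, θ_j = 1) / max(Σ_{j=1}^m 1(δ_j = 2), 1) ] ≤ α, and (ii) E[Σ_{j=1}^m 1(δ_j = 2, θ_j = 1)] ≤ α·E[Σ_{j=1}^m 1(δ_j = 2)]. -/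

import Mathlib

open MeasureTheory ProbabilityTheory

/-- **Selection under an almost-sure conditional-probability budget controls both FSR and mFSR**
(key step in the proof of Theorem 2).  Here `T^j` is a version of `P(θ_j = 1 | 𝒲)`, the
`{0,2}`-valued selections `δ_j` are `σ(𝒲)`-measurable, and a.s.
`Σ_j T^j·1(δ_j = 2) ≤ α·Σ_j 1(δ_j = 2)`; then both the FSR-type and the mFSR-type quantities
for class 2 are bounded by `α`. -/
theorem budget_controls_FSR_and_mFSR {Ω 𝒲 : Type*} [MeasurableSpace Ω] [MeasurableSpace 𝒲]
    (P : Measure Ω) [IsProbabilityMeasure P] {m : ℕ}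
    (W : Ω → 𝒲) (hW : Measurable W)
    (θ : Fin m → Ω → ℕ) (hθmeas : ∀ j, Measurable (θ j))
    (hθval : ∀ j ω, θ j ω = 1 ∨ θ j ω = 2)
    (T : Fin m → Ω → ℝ)
    (hTmeas : ∀ j, Measurable[MeasurableSpace.comap W inferInstance] (T j))
    (hTrange : ∀ j ω, T j ω ∈ Set.Icc (0 : ℝ) 1)
    (hTver : ∀ j, ∀ A : Set 𝒲, MeasurableSet A →
      ∫ ω in W ⁻¹' A, T j ω ∂P = (P (W ⁻¹' A ∩ {ω | θ j ω = 1})).toReal)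
    (δ : Fin m → Ω → ℕ)
    (hδval : ∀ j ω, δ j ω = 0 ∨ δ j ω = 2)
    (hδmeas : ∀ j, Measurable[MeasurableSpace.comap W inferInstance] (δ j))
    (α : ℝ) (hα : α ∈ Set.Ioo (0 : ℝ) 1)
    (hbudget : ∀ᵐ ω ∂P,
      (∑ j, T j ω * (if δ j ω = 2 then 1 else 0)) ≤
        α * ∑ j, (if δ j ω = 2 then (1 : ℝ) else 0)) :
    (∫ ω, (∑ j, if δ j ω = 2 ∧ θ j ω = 1 then (1 : ℝ) else 0) /
        max (∑ j, if δ j ω = 2 then (1 : ℝ) else 0) 1 ∂P) ≤ α ∧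
    (∫ ω, (∑ j, if δ j ω = 2 ∧ θ j ω = 1 then (1 : ℝ) else 0) ∂P) ≤
      α * ∫ ω, (∑ j, if δ j ω = 2 then (1 : ℝ) else 0) ∂P := by
  classical
  have hle := hW.comap_le
  haveI : SigmaFinite (P.trim hle) := by
    haveI : IsFiniteMeasure (P.trim hle) := isFiniteMeasure_trim hle
    infer_instance
  -- integrability of bounded measurable functions
  have hInt : ∀ (f : Ω → ℝ) (C : ℝ), Measurable f → (∀ ω, ‖f ω‖ ≤ C) → Integrable f P := by
    intro f C hf hb
    exact (integrable_const C).mono' hf.aestronglyMeasurable (ae_of_all _ hb)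
  -- notation
  set D : Ω → ℝ := fun ω => ∑ j, (if δ j ω = 2 then (1 : ℝ) else 0) with hD
  set indθ : Fin m → Ω → ℝ := fun j ω => if θ j ω = 1 then (1 : ℝ) else 0 with hindθ
  set indδ : Fin m → Ω → ℝ := fun j ω => if δ j ω = 2 then (1 : ℝ) else 0 with hindδ
  have hindδ_mW : ∀ j, Measurable[MeasurableSpace.comap W inferInstance] (indδ j) := fun j =>
    Measurable.ite (hδmeas j (measurableSet_singleton 2)) measurable_const measurable_const
  have hD_mW : Measurable[MeasurableSpace.comap W inferInstance] D := Finset.measurable_sum _ fun j _ => hindδ_mW j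
  have hindδ_meas : ∀ j, Measurable (indδ j) := fun j => (hindδ_mW j).mono hle le_rfl
  have hD_meas : Measurable D := hD_mW.mono hle le_rfl
  have hindθ_meas : ∀ j, Measurable (indθ j) := fun j =>
    Measurable.ite (hθmeas j (measurableSet_singleton 1)) measurable_const measurable_const
  have hT_meas : ∀ j, Measurable (T j) := fun j => (hTmeas j).mono hle le_rfl
  have hindδ01 : ∀ j ω, 0 ≤ indδ j ω ∧ indδ j ω ≤ 1 := by
    intro j ω; simp only [hindδ]; split <;> norm_num
  have hindθ01 : ∀ j ω, 0 ≤ indθ j ω ∧ indθ j ω ≤ 1 := by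
    intro j ω; simp only [hindθ]; split <;> norm_num
  have hDmax_pos : ∀ ω, (0:ℝ) < max (D ω) 1 := fun ω => lt_of_lt_of_le one_pos (le_max_right _ _)
  -- T j is a version of the conditional expectation of indθ j
  have hindθ_int : ∀ j, Integrable (indθ j) P := fun j =>
    hInt _ 1 (hindθ_meas j) (fun ω => by simp only [hindθ]; split <;> norm_num)
  have hTcond : ∀ j, T j =ᵐ[P] P[indθ j | MeasurableSpace.comap W inferInstance] := by
    intro j
    refine ae_eq_condExp_of_forall_setIntegral_eq hle (hindθ_int j) ?_ ?_ ?_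
    · intro s _ _
      exact (hInt _ 1 (hT_meas j) (fun ω => by
        rw [Real.norm_eq_abs, abs_le]
        exact ⟨by linarith [(hTrange j ω).1], (hTrange j ω).2⟩)).integrableOn
    · intro s hs _
      obtain ⟨A, hA, rfl⟩ := hs
      rw [hTver j A hA]
      have h1 : indθ j = Set.indicator {ω | θ j ω = 1} (fun _ => (1:ℝ)) := by
        funext ω; simp [hindθ, Set.indicator_apply]
      have hms : MeasurableSet {ω | θ j ω = 1} := hθmeas j (measurableSet_singleton 1)
      rw [h1, setIntegral_indicator hms, setIntegral_const, smul_eq_mul, mul_one, Measure.real]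
    · exact (StronglyMeasurable.aestronglyMeasurable
        ((hTmeas j).stronglyMeasurable))
  -- pull-out property: for bounded mW-measurable g, ∫ g·indθ j = ∫ g·T j
  have key : ∀ (j : Fin m) (g : Ω → ℝ), Measurable[MeasurableSpace.comap W inferInstance] g → (∀ ω, ‖g ω‖ ≤ 1) →
      ∫ ω, g ω * indθ j ω ∂P = ∫ ω, g ω * T j ω ∂P := by
    intro j g hg hb
    have hg0 : Measurable g := hg.mono hle le_rfl
    have hgf_int : Integrable (g * indθ j) P := by
      refine hInt _ 1 (hg0.mul (hindθ_meas j)) (fun ω => ?_)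
      rw [Pi.mul_apply, norm_mul]
      calc ‖g ω‖ * ‖indθ j ω‖ ≤ 1 * 1 := by
            refine mul_le_mul (hb ω) ?_ (norm_nonneg _) zero_le_one
            rw [Real.norm_eq_abs, abs_le]
            exact ⟨by linarith [(hindθ01 j ω).1], (hindθ01 j ω).2⟩
        _ = 1 := one_mul 1
    have hmul : P[g * indθ j | MeasurableSpace.comap W inferInstance] =ᵐ[P] g * P[indθ j | MeasurableSpace.comap W inferInstance] :=
      condExp_stronglyMeasurable_mul_of_bound hle hg.stronglyMeasurable (hindθ_int j) 1
        (ae_of_all _ hb)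
    calc ∫ ω, g ω * indθ j ω ∂P = ∫ ω, (g * indθ j) ω ∂P := rfl
      _ = ∫ ω, (P[g * indθ j | MeasurableSpace.comap W inferInstance]) ω ∂P := (integral_condExp hle).symm
      _ = ∫ ω, (g * P[indθ j | MeasurableSpace.comap W inferInstance]) ω ∂P := integral_congr_ae hmul
      _ = ∫ ω, g ω * T j ω ∂P := by
          refine integral_congr_ae ?_
          filter_upwards [hTcond j] with ω hω
          simp [hω]
  -- the two families of W-measurable weights
  have hg1_mW : ∀ j, Measurable[MeasurableSpace.comap W inferInstance] (fun ω => indδ j ω / max (D ω) 1) := fun j =>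
    (hindδ_mW j).div (hD_mW.max measurable_const)
  have hg1_bd : ∀ j ω, ‖indδ j ω / max (D ω) 1‖ ≤ 1 := by
    intro j ω
    rw [Real.norm_eq_abs, abs_div, abs_of_pos (hDmax_pos ω), div_le_one (hDmax_pos ω), abs_le]
    constructor
    · linarith [(hindδ01 j ω).1, hDmax_pos ω]
    · exact (hindδ01 j ω).2.trans (le_max_right _ _)
  have hg2_bd : ∀ j ω, ‖indδ j ω‖ ≤ 1 := by
    intro j ω
    rw [Real.norm_eq_abs, abs_le]
    exact ⟨by linarith [(hindδ01 j ω).1], (hindδ01 j ω).2⟩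
  -- integrability of the weighted sums of T's
  have hTsum_meas : Measurable (fun ω => ∑ j, T j ω * indδ j ω) :=
    Finset.measurable_sum _ fun j _ => (hT_meas j).mul (hindδ_meas j)
  have hTsum_bd : ∀ ω, ‖∑ j, T j ω * indδ j ω‖ ≤ m := by
    intro ω
    calc ‖∑ j, T j ω * indδ j ω‖ ≤ ∑ j, ‖T j ω * indδ j ω‖ := norm_sum_le _ _
      _ ≤ ∑ _j : Fin m, (1:ℝ) := by
          refine Finset.sum_le_sum fun j _ => ?_
          rw [norm_mul]
          calc ‖T j ω‖ * ‖indδ j ω‖ ≤ 1 * 1 := by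
                refine mul_le_mul ?_ (hg2_bd j ω) (norm_nonneg _) zero_le_one
                rw [Real.norm_eq_abs, abs_le]
                exact ⟨by linarith [(hTrange j ω).1], (hTrange j ω).2⟩
            _ = 1 := one_mul 1
      _ = m := by simp
  -- Part (ii) main computation
  have hmFSR_eq : ∫ ω, (∑ j, if δ j ω = 2 ∧ θ j ω = 1 then (1 : ℝ) else 0) ∂P
      = ∫ ω, (∑ j, T j ω * indδ j ω) ∂P := by
    have hpt : ∀ ω, (∑ j, if δ j ω = 2 ∧ θ j ω = 1 then (1 : ℝ) else 0)
        = ∑ j, indδ j ω * indθ j ω := by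
      intro ω
      refine Finset.sum_congr rfl fun j _ => ?_
      by_cases h1 : δ j ω = 2 <;> by_cases h2 : θ j ω = 1 <;> simp [hindδ, hindθ, h1, h2]
    simp_rw [hpt]
    rw [integral_finset_sum _ (f := fun j ω => indδ j ω * indθ j ω) (fun j _ => hInt _ 1 ((hindδ_meas j).mul (hindθ_meas j))
        (fun ω => by
          rw [norm_mul]
          calc ‖indδ j ω‖ * ‖indθ j ω‖ ≤ 1 * 1 := by
                refine mul_le_mul (hg2_bd j ω) ?_ (norm_nonneg _) zero_le_one
                rw [Real.norm_eq_abs, abs_le]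
                exact ⟨by linarith [(hindθ01 j ω).1], (hindθ01 j ω).2⟩
            _ = 1 := one_mul 1)),
      integral_finset_sum _ (f := fun j ω => T j ω * indδ j ω) (fun j _ => hInt _ 1 ((hT_meas j).mul (hindδ_meas j))
        (fun ω => by
          rw [norm_mul]
          calc ‖T j ω‖ * ‖indδ j ω‖ ≤ 1 * 1 := by
                refine mul_le_mul ?_ (hg2_bd j ω) (norm_nonneg _) zero_le_one
                rw [Real.norm_eq_abs, abs_le]
                exact ⟨by linarith [(hTrange j ω).1], (hTrange j ω).2⟩
            _ = 1 := one_mul 1))]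
    refine Finset.sum_congr rfl fun j _ => ?_
    rw [key j (indδ j) (hindδ_mW j) (hg2_bd j)]
    simp_rw [mul_comm]
  -- Part (i) main computation
  have hFSR_eq : ∫ ω, (∑ j, if δ j ω = 2 ∧ θ j ω = 1 then (1 : ℝ) else 0) /
        max (∑ j, if δ j ω = 2 then (1 : ℝ) else 0) 1 ∂P
      = ∫ ω, (∑ j, T j ω * indδ j ω) / max (D ω) 1 ∂P := by
    have hpt : ∀ ω, (∑ j, if δ j ω = 2 ∧ θ j ω = 1 then (1 : ℝ) else 0) /
        max (∑ j, if δ j ω = 2 then (1 : ℝ) else 0) 1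
        = ∑ j, (indδ j ω / max (D ω) 1) * indθ j ω := by
      intro ω
      rw [Finset.sum_div]
      refine Finset.sum_congr rfl fun j _ => ?_
      by_cases h1 : δ j ω = 2 <;> by_cases h2 : θ j ω = 1 <;>
        simp [hindδ, hindθ, hD, h1, h2, div_eq_mul_inv]
    have hpt2 : ∀ ω, (∑ j, T j ω * indδ j ω) / max (D ω) 1
        = ∑ j, (indδ j ω / max (D ω) 1) * T j ω := by
      intro ω
      rw [Finset.sum_div]
      refine Finset.sum_congr rfl fun j _ => ?_
      ring
    simp_rw [hpt, hpt2]
    rw [integral_finset_sum _ (f := fun j ω => indδ j ω / max (D ω) 1 * indθ j ω) (fun j _ => hInt _ 1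
        (((hg1_mW j).mono hle le_rfl).mul (hindθ_meas j)) (fun ω => by
          rw [norm_mul]
          calc ‖indδ j ω / max (D ω) 1‖ * ‖indθ j ω‖ ≤ 1 * 1 := by
                refine mul_le_mul (hg1_bd j ω) ?_ (norm_nonneg _) zero_le_one
                rw [Real.norm_eq_abs, abs_le]
                exact ⟨by linarith [(hindθ01 j ω).1], (hindθ01 j ω).2⟩
            _ = 1 := one_mul 1)),
      integral_finset_sum _ (f := fun j ω => indδ j ω / max (D ω) 1 * T j ω) (fun j _ => hInt _ 1
        (((hg1_mW j).mono hle le_rfl).mul (hT_meas j)) (fun ω => by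
          rw [norm_mul]
          calc ‖indδ j ω / max (D ω) 1‖ * ‖T j ω‖ ≤ 1 * 1 := by
                refine mul_le_mul (hg1_bd j ω) ?_ (norm_nonneg _) zero_le_one
                rw [Real.norm_eq_abs, abs_le]
                exact ⟨by linarith [(hTrange j ω).1], (hTrange j ω).2⟩
            _ = 1 := one_mul 1))]
    refine Finset.sum_congr rfl fun j _ => ?_
    exact key j _ (hg1_mW j) (hg1_bd j)
  constructor
  · -- FSR bound
    rw [hFSR_eq]
    have hmono : ∫ ω, (∑ j, T j ω * indδ j ω) / max (D ω) 1 ∂P ≤ ∫ _ω, α ∂P := by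
      refine integral_mono_ae ?_ (integrable_const α) ?_
      · refine hInt _ m (hTsum_meas.div (hD_meas.max measurable_const)) (fun ω => ?_)
        rw [Real.norm_eq_abs, abs_div, abs_of_pos (hDmax_pos ω)]
        calc |∑ j, T j ω * indδ j ω| / max (D ω) 1 ≤ (m:ℝ) / 1 := by
              refine div_le_div₀ (Nat.cast_nonneg m) ?_ one_pos (le_max_right _ _)
              simpa [Real.norm_eq_abs] using hTsum_bd ω
          _ = m := div_one _
      · filter_upwards [hbudget] with ω hω
        have h1 : (∑ j, T j ω * indδ j ω) / max (D ω) 1 ≤ α * D ω / max (D ω) 1 := by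
          gcongr
        refine h1.trans ?_
        rw [div_le_iff₀ (hDmax_pos ω)]
        exact mul_le_mul_of_nonneg_left (le_max_left _ _) (le_of_lt hα.1)
    calc _ ≤ ∫ _ω, α ∂P := hmono
      _ = α := by simp
  · -- mFSR bound
    rw [hmFSR_eq]
    have hmono : ∫ ω, (∑ j, T j ω * indδ j ω) ∂P ≤ ∫ ω, α * D ω ∂P := by
      refine integral_mono_ae (hInt _ m hTsum_meas hTsum_bd) ?_ hbudget
      refine hInt _ m (measurable_const.mul hD_meas) (fun ω => ?_)
      rw [norm_mul, Real.norm_eq_abs, abs_of_pos hα.1, Real.norm_eq_abs]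
      have hDle : |D ω| ≤ m := by
        rw [abs_of_nonneg (Finset.sum_nonneg fun j _ => (hindδ01 j ω).1)]
        calc D ω ≤ ∑ _j : Fin m, (1:ℝ) := Finset.sum_le_sum fun j _ => (hindδ01 j ω).2
          _ = m := by simp
      calc α * |D ω| ≤ 1 * m := by
            refine mul_le_mul (le_of_lt hα.2) hDle (abs_nonneg _) zero_le_one
        _ = m := one_mul _
    rw [integral_const_mul] at hmono
    exact hmono
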